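/- Let R be a Noetherian normal domain and let M, N be finitely generated R-modules satisfying Serre's condition S₂, both locally free in codimension ≤ 1. If a homomorphism φ : M → N restricts to an isomorphism over the complement of a closed subset of codimension ≥ 2 in Spec R, then φ is an isomorphism. -/

import Mathlib

open IsLocalRing

/-- The depth of a module `M` over a local ring `(R, 𝔪)`: the supremum of the lengths of
weakly `M`-regular sequences of elements of the maximal ideal. -/
noncomputable def moduleDepth (R M : Type*) [CommRing R] [IsLocalRing R]
    [AddCommGroup M] [Module R M] : ℕ∞ :=
  ⨆ rs : {l : List R // (∀ x ∈ l, x ∈ maximalIdeal R) ∧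
      RingTheory.Sequence.IsWeaklyRegular M l}, (rs.1.length : ℕ∞)

/-- Serre's condition `S₂` for a module `M` over a Noetherian ring `R`:
`depth M_P ≥ min(2, dim R_P)` for all primes `P` in the support of `M`. -/
def IsS2Module (R M : Type*) [CommRing R] [AddCommGroup M] [Module R M] : Prop :=
  ∀ (P : Ideal R) (hP : P.IsPrime), Module.annihilator R M ≤ P →
    letI := hP
    min (2 : WithBot (WithTop ℕ)) (ringKrullDim (Localization.AtPrime P)) ≤
      WithBot.some (moduleDepth (Localization.AtPrime P) (LocalizedModule P.primeCompl M))

/-- `M` is locally free in codimension `≤ 1`: its localization at every prime `P` with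
`dim R_P ≤ 1` is free. -/
def IsLocallyFreeInCodimOne (R M : Type*) [CommRing R] [AddCommGroup M] [Module R M] : Prop :=
  ∀ (P : Ideal R) (hP : P.IsPrime),
    (letI := hP; ringKrullDim (Localization.AtPrime P) ≤ 1) →
    letI := hP
    Module.Free (Localization.AtPrime P) (LocalizedModule P.primeCompl M)

open Pointwise

section Aux

private lemma mk_eq_zero' {R X : Type*} [CommRing R] {S : Submonoid R} [AddCommGroup X]
    [Module R X] {x : X} {s : S} :
    LocalizedModule.mk x s = 0 ↔ ∃ u : S, (u : R) • x = 0 := by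
  rw [show (0 : LocalizedModule S X) = LocalizedModule.mk 0 s from
    (LocalizedModule.zero_mk s).symm, LocalizedModule.mk_eq]
  constructor
  · rintro ⟨u, hu⟩
    simp only [Submonoid.smul_def, smul_zero] at hu
    exact ⟨u * s, by rw [Submonoid.coe_mul, mul_smul]; exact hu⟩
  · rintro ⟨u, hu⟩
    exact ⟨u, by simp only [Submonoid.smul_def, smul_zero]; rw [smul_comm, hu, smul_zero]⟩

private lemma mk_one_ne_zero' {R X : Type*} [CommRing R] {P : Ideal R} [P.IsPrime]
    [AddCommGroup X] [Module R X] {x : X} (hx : ∀ r ∉ P, r • x ≠ 0) :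
    LocalizedModule.mk x (1 : P.primeCompl) ≠ 0 := by
  intro h
  obtain ⟨u, hu⟩ := mk_eq_zero'.mp h
  exact hx u u.2 hu

private lemma exists_regular_pair {A M : Type*} [CommRing A] [IsLocalRing A] [AddCommGroup M]
    [Module A M] (h : (2 : ℕ∞) ≤ moduleDepth A M) :
    ∃ a b : A, a ∈ maximalIdeal A ∧ b ∈ maximalIdeal A ∧ IsSMulRegular M a ∧
      IsSMulRegular (QuotSMulTop a M) b := by
  have h1 : (1 : ℕ∞) < ⨆ rs : {l : List A // (∀ x ∈ l, x ∈ maximalIdeal A) ∧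
      RingTheory.Sequence.IsWeaklyRegular M l}, (rs.1.length : ℕ∞) :=
    lt_of_lt_of_le (by exact_mod_cast Nat.one_lt_two) h
  rw [lt_iSup_iff] at h1
  obtain ⟨⟨l, hmem, hreg⟩, hl⟩ := h1
  have hlen : 1 < l.length := by exact_mod_cast hl
  rcases l with _ | ⟨a, _ | ⟨b, t⟩⟩
  · simp at hlen
  · simp at hlen
  · rw [RingTheory.Sequence.isWeaklyRegular_cons_iff] at hreg
    obtain ⟨ha, hreg⟩ := hreg
    rw [RingTheory.Sequence.isWeaklyRegular_cons_iff] at hreg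
    exact ⟨a, b, hmem a (by simp), hmem b (by simp), ha, hreg.1⟩

private lemma quotReg_elementwise {A M : Type*} [CommRing A] [AddCommGroup M] [Module A M]
    {a b : A} (h : IsSMulRegular (QuotSMulTop a M) b) {m : M} (hm : ∃ m', b • m = a • m') :
    ∃ m'', m = a • m'' := by
  obtain ⟨m', hm'⟩ := hm
  have h0 : Submodule.Quotient.mk (p := a • (⊤ : Submodule A M)) m = 0 := by
    apply h
    show b • (Submodule.Quotient.mk m : QuotSMulTop a M) = b • 0
    rw [smul_zero, ← Submodule.Quotient.mk_smul, hm', Submodule.Quotient.mk_eq_zero]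
    exact Submodule.smul_mem_pointwise_smul m' a ⊤ Submodule.mem_top
  rw [Submodule.Quotient.mk_eq_zero] at h0
  rw [← SetLike.mem_coe, Submodule.coe_pointwise_smul] at h0
  obtain ⟨y, -, hy⟩ := Set.mem_smul_set.mp h0
  exact ⟨y, hy.symm⟩

private lemma quotReg_pow {A M : Type*} [CommRing A] [AddCommGroup M] [Module A M] {a b : A}
    (ha : IsSMulRegular M a)
    (hq : ∀ m : M, (∃ m', b • m = a • m') → ∃ m'', m = a • m'') :
    ∀ (k : ℕ) (m : M), (∃ m', b • m = a ^ k • m') → ∃ m'', m = a ^ k • m'' := by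
  intro k
  induction k with
  | zero => intro m _; exact ⟨m, by simp⟩
  | succ k ih =>
    rintro m ⟨m', hm'⟩
    obtain ⟨m₂, rfl⟩ := hq m ⟨a ^ k • m', by rw [hm', pow_succ', mul_smul]⟩
    have h2 : a • (b • m₂) = a • (a ^ k • m') := by
      rw [smul_comm a b m₂, hm', pow_succ', mul_smul]
    obtain ⟨m₃, hm₃⟩ := ih m₂ ⟨m', ha h2⟩
    exact ⟨m₃, by rw [hm₃, pow_succ', mul_smul]⟩

private lemma quotReg_bpow {A M : Type*} [CommRing A] [AddCommGroup M] [Module A M] {α b : A}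
    (hq : ∀ m : M, (∃ m', b • m = α • m') → ∃ m'', m = α • m'') :
    ∀ (s : ℕ) (m : M), (∃ m', b ^ s • m = α • m') → ∃ m'', m = α • m'' := by
  intro s
  induction s with
  | zero => rintro m ⟨m', h⟩; exact ⟨m', by simpa using h⟩
  | succ s ih =>
    rintro m ⟨m', h⟩
    have h1 : b ^ s • (b • m) = α • m' := by rw [← mul_smul, ← pow_succ]; exact h
    exact hq m (ih (b • m) ⟨m', h1⟩)

private lemma aux_pow_ann {R : Type*} [CommRing R] {P : Ideal R} [hP : P.IsPrime]
    (X : Type*) [AddCommGroup X] [Module R X]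
    (hmin : P ∈ (Module.annihilator R X).minimalPrimes)
    {z : Localization.AtPrime P} (hz : z ∈ maximalIdeal (Localization.AtPrime P)) :
    ∃ n : ℕ, ∀ y : LocalizedModule P.primeCompl X, z ^ n • y = 0 := by
  have hrad : z ∈ (Module.annihilator (Localization.AtPrime P)
      (LocalizedModule P.primeCompl X)).radical := by
    rw [Ideal.radical_eq_sInf]
    apply Submodule.mem_sInf.mpr
    rintro q ⟨hle, hq⟩
    haveI := hq
    have hQp : (Ideal.comap (algebraMap R (Localization.AtPrime P)) q).IsPrime :=
      Ideal.IsPrime.comap _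
    have hannQ : Module.annihilator R X ≤ Ideal.comap (algebraMap R (Localization.AtPrime P)) q := by
      intro r hr
      rw [Ideal.mem_comap]
      apply hle
      rw [Module.mem_annihilator]
      intro y
      refine LocalizedModule.induction_on ?_ y
      intro x s
      rw [← Localization.mk_one_eq_algebraMap, LocalizedModule.mk_smul_mk,
        Module.mem_annihilator.mp hr x, LocalizedModule.zero_mk]
    have hQP : Ideal.comap (algebraMap R (Localization.AtPrime P)) q ≤ P := by
      intro r hrQ
      by_contra hrP
      exact hq.ne_top (Ideal.eq_top_of_isUnit_mem q (Ideal.mem_comap.mp hrQ)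
        (IsLocalization.map_units (Localization.AtPrime P) ⟨r, show r ∈ P.primeCompl from hrP⟩))
    have hPQ : Ideal.comap (algebraMap R (Localization.AtPrime P)) q = P :=
      le_antisymm hQP (hmin.2 ⟨hQp, hannQ⟩ hQP)
    have h1 : z ∈ P.map (algebraMap R (Localization.AtPrime P)) := by
      rwa [Localization.AtPrime.map_eq_maximalIdeal]
    have h2 : Ideal.map (algebraMap R (Localization.AtPrime P))
        (Ideal.comap (algebraMap R (Localization.AtPrime P)) q) =
        Ideal.map (algebraMap R (Localization.AtPrime P)) P := by rw [hPQ]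
    rw [← h2] at h1
    exact Ideal.map_comap_le h1
  obtain ⟨n, hn⟩ := Ideal.mem_radical_iff.mp hrad
  exact ⟨n, fun y => Module.mem_annihilator.mp hn y⟩

end Aux

private theorem stmt12_inj {R : Type*} [CommRing R] [IsNoetherianRing R]
    [IsDomain R] [IsIntegrallyClosed R]
    (M N : Type*) [AddCommGroup M] [Module R M] [Module.Finite R M]
    [AddCommGroup N] [Module R N] [Module.Finite R N]
    (hS2M : IsS2Module R M) (hS2N : IsS2Module R N)
    (I : Ideal R)
    (hcodim : ∀ (P : Ideal R) (hP : P.IsPrime), I ≤ P →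
      letI := hP
      (2 : WithBot (WithTop ℕ)) ≤ ringKrullDim (Localization.AtPrime P))
    (φ : M →ₗ[R] N)
    (hiso : ∀ (P : Ideal R) (hP : P.IsPrime), ¬ I ≤ P →
      letI := hP
      Function.Bijective
        (IsLocalizedModule.map P.primeCompl
          (LocalizedModule.mkLinearMap P.primeCompl M)
          (LocalizedModule.mkLinearMap P.primeCompl N) φ)) :
    Function.Injective φ := by
  haveI : IsNoetherian R M := isNoetherian_of_isNoetherianRing_of_finite R M
  by_contra hni
  set K := LinearMap.ker φ with hKdef
  have hKne : K ≠ ⊥ := fun h => hni (LinearMap.ker_eq_bot.mp h)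
  haveI : Nontrivial ↥K := Submodule.nontrivial_iff_ne_bot.mpr hKne
  haveI : Module.Finite R ↥K := Module.Finite.iff_fg.mpr (IsNoetherian.noetherian K)
  have hannne : Module.annihilator R ↥K ≠ ⊤ := by
    intro h
    obtain ⟨k, hk⟩ := exists_ne (0 : ↥K)
    apply hk
    have h1 : (1 : R) ∈ Module.annihilator R ↥K := h ▸ Submodule.mem_top
    simpa using Module.mem_annihilator.mp h1 k
  obtain ⟨Pm, hPmmax, hPmle⟩ := Ideal.exists_le_maximal _ hannne
  haveI := hPmmax.isPrime
  obtain ⟨P, hPmin, -⟩ := Ideal.exists_minimalPrimes_le hPmle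
  haveI hP : P.IsPrime := hPmin.1.1
  have hannP : Module.annihilator R ↥K ≤ P := hPmin.1.2
  have hsupp : (⟨P, hP⟩ : PrimeSpectrum R) ∈ Module.support R ↥K :=
    Module.mem_support_iff_of_finite.mpr hannP
  obtain ⟨k, hk⟩ := Module.mem_support_iff'.mp hsupp
  set S := P.primeCompl with hSdef
  set φP := IsLocalizedModule.map S (LocalizedModule.mkLinearMap S M)
    (LocalizedModule.mkLinearMap S N) φ with hφPdef
  -- I ≤ P
  have hIP : I ≤ P := by
    by_contra hIP
    have hbij := hiso P hP hIP
    have h0 : φP (LocalizedModule.mk (↑k : M) (1 : S)) = 0 := by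
      rw [hφPdef, IsLocalizedModule.map_LocalizedModules,
        show φ ↑k = 0 from LinearMap.mem_ker.mp k.2, LocalizedModule.zero_mk]
    have hmk0 : LocalizedModule.mk (↑k : M) (1 : S) = 0 := hbij.1 (by rw [h0, map_zero])
    obtain ⟨u, hu⟩ := mk_eq_zero'.mp hmk0
    exact hk u u.2 (Subtype.ext (by simpa using hu))
  -- S₂ condition for M at P
  have hannM : Module.annihilator R M ≤ P := by
    refine le_trans ?_ hannP
    intro r hr
    rw [Module.mem_annihilator] at hr ⊢
    intro x
    exact Subtype.ext (by simpa using hr ↑x)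
  have hdim := hcodim P hP hIP
  have hdep := hS2M P hP hannM
  rw [min_eq_left hdim] at hdep
  have h2 : (2 : ℕ∞) ≤ moduleDepth (Localization.AtPrime P) (LocalizedModule S M) := by
    exact (WithBot.coe_le_coe (a := (2 : ℕ∞))).mp hdep
  obtain ⟨a, b, haM, hbM, ha, hb⟩ := exists_regular_pair h2
  obtain ⟨n, hn⟩ := aux_pow_ann ↥K hPmin haM
  set ι := IsLocalizedModule.map S (LocalizedModule.mkLinearMap S ↥K)
    (LocalizedModule.mkLinearMap S M) K.subtype with hιdef
  haveI := IsLocalization.linearMap_compatibleSMul S (Localization.AtPrime P)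
    (LocalizedModule S ↥K) (LocalizedModule S M)
  have hkey : (a ^ n) • LocalizedModule.mk (↑k : M) (1 : S) = 0 := by
    have h1 : ι (LocalizedModule.mk k (1 : S)) = LocalizedModule.mk (↑k : M) (1 : S) := by
      rw [hιdef, IsLocalizedModule.map_LocalizedModules]; rfl
    rw [← h1, ← LinearMap.map_smul_of_tower, hn, map_zero]
  have hzero : LocalizedModule.mk (↑k : M) (1 : S) = 0 :=
    (ha.pow n) (by simpa using hkey)
  obtain ⟨u, hu⟩ := mk_eq_zero'.mp hzero
  exact hk u u.2 (Subtype.ext (by simpa using hu))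


private theorem stmt12_surj {R : Type*} [CommRing R] [IsNoetherianRing R]
    [IsDomain R] [IsIntegrallyClosed R]
    (M N : Type*) [AddCommGroup M] [Module R M] [Module.Finite R M]
    [AddCommGroup N] [Module R N] [Module.Finite R N]
    (hS2M : IsS2Module R M) (hS2N : IsS2Module R N)
    (I : Ideal R)
    (hcodim : ∀ (P : Ideal R) (hP : P.IsPrime), I ≤ P →
      letI := hP
      (2 : WithBot (WithTop ℕ)) ≤ ringKrullDim (Localization.AtPrime P))
    (φ : M →ₗ[R] N)
    (hiso : ∀ (P : Ideal R) (hP : P.IsPrime), ¬ I ≤ P →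
      letI := hP
      Function.Bijective
        (IsLocalizedModule.map P.primeCompl
          (LocalizedModule.mkLinearMap P.primeCompl M)
          (LocalizedModule.mkLinearMap P.primeCompl N) φ))
    (hinj : Function.Injective φ) :
    Function.Surjective φ := by
  by_contra hns
  set C := N ⧸ LinearMap.range φ with hCdef
  set π : N →ₗ[R] C := (LinearMap.range φ).mkQ with hπdef
  have hlt : LinearMap.range φ < ⊤ :=
    lt_top_iff_ne_top.mpr (fun h => hns (LinearMap.range_eq_top.mp h))
  haveI : Nontrivial C := Submodule.Quotient.nontrivial_iff.mpr hlt.ne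
  haveI : Module.Finite R C := Module.Finite.of_surjective π (Submodule.mkQ_surjective _)
  have hannne : Module.annihilator R C ≠ ⊤ := by
    intro h
    obtain ⟨c, hc⟩ := exists_ne (0 : C)
    apply hc
    have h1 : (1 : R) ∈ Module.annihilator R C := h ▸ Submodule.mem_top
    simpa using Module.mem_annihilator.mp h1 c
  obtain ⟨Pm, hPmmax, hPmle⟩ := Ideal.exists_le_maximal _ hannne
  haveI := hPmmax.isPrime
  obtain ⟨P, hPmin, -⟩ := Ideal.exists_minimalPrimes_le hPmle
  haveI hP : P.IsPrime := hPmin.1.1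
  have hannP : Module.annihilator R C ≤ P := hPmin.1.2
  have hsupp : (⟨P, hP⟩ : PrimeSpectrum R) ∈ Module.support R C :=
    Module.mem_support_iff_of_finite.mpr hannP
  obtain ⟨c, hc⟩ := Module.mem_support_iff'.mp hsupp
  set S := P.primeCompl with hSdef
  set φP := IsLocalizedModule.map S (LocalizedModule.mkLinearMap S M)
    (LocalizedModule.mkLinearMap S N) φ with hφPdef
  set πP := IsLocalizedModule.map S (LocalizedModule.mkLinearMap S N)
    (LocalizedModule.mkLinearMap S C) π with hπPdef
  haveI := IsLocalization.linearMap_compatibleSMul S (Localization.AtPrime P)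
    (LocalizedModule S N) (LocalizedModule S C)
  haveI := IsLocalization.linearMap_compatibleSMul S (Localization.AtPrime P)
    (LocalizedModule S M) (LocalizedModule S N)
  -- I ≤ P
  have hIP : I ≤ P := by
    by_contra hIP
    have hbij := hiso P hP hIP
    obtain ⟨n, hn⟩ := Submodule.mkQ_surjective (LinearMap.range φ) c
    obtain ⟨v, hv⟩ := hbij.2 (LocalizedModule.mk n (1 : S))
    revert hv
    refine LocalizedModule.induction_on ?_ v
    intro m s hv
    rw [IsLocalizedModule.map_LocalizedModules] at hv
    rw [LocalizedModule.mk_eq] at hv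
    obtain ⟨u, hu⟩ := hv
    simp only [Submonoid.smul_def, one_smul] at hu
    refine hc (↑u * ↑s) (Submonoid.mul_mem S u.2 s.2) ?_
    have h1 : ((↑u * ↑s : R)) • n = φ ((↑u : R) • m) := by
      rw [mul_smul, map_smul]; exact hu.symm
    rw [← hn, ← map_smul, h1]
    exact (Submodule.Quotient.mk_eq_zero _).mpr (LinearMap.mem_range_self φ _)
  -- exactness
  have hexact : ∀ v : LocalizedModule S N, πP v = 0 → ∃ w, φP w = v := by
    intro v
    refine LocalizedModule.induction_on ?_ v
    intro n s hv
    rw [hπPdef, IsLocalizedModule.map_LocalizedModules] at hv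
    obtain ⟨u, hu⟩ := mk_eq_zero'.mp hv
    have h1 : (↑u : R) • n ∈ LinearMap.range φ := by
      rw [← Submodule.ker_mkQ (LinearMap.range φ), LinearMap.mem_ker, ← hπdef]
      rw [map_smul, hu]
    obtain ⟨m, hm⟩ := h1
    refine ⟨LocalizedModule.mk m (u * s), ?_⟩
    rw [hφPdef, IsLocalizedModule.map_LocalizedModules, hm, ← Submonoid.smul_def,
      LocalizedModule.mk_cancel_common_left u s n]
  -- πP ∘ φP = 0
  have hπφ : ∀ w, πP (φP w) = 0 := by
    have h0 : π ∘ₗ φ = 0 :=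
      LinearMap.ext fun m => (Submodule.Quotient.mk_eq_zero _).mpr (LinearMap.mem_range_self φ m)
    intro w
    have h1 : πP.comp φP = 0 := by
      rw [hπPdef, hφPdef, ← IsLocalizedModule.map_comp', h0, map_zero]
    exact LinearMap.congr_fun h1 w
  -- S₂ for N at P
  have hannN : Module.annihilator R N ≤ P := by
    refine le_trans ?_ hannP
    intro r hr
    rw [Module.mem_annihilator] at hr ⊢
    intro x
    obtain ⟨n, rfl⟩ := Submodule.mkQ_surjective (LinearMap.range φ) x
    rw [← map_smul, hr n, map_zero]
  have hdim := hcodim P hP hIP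
  have hdepN := hS2N P hP hannN
  rw [min_eq_left hdim] at hdepN
  have h2N : (2 : ℕ∞) ≤ moduleDepth (Localization.AtPrime P) (LocalizedModule S N) := by
    exact (WithBot.coe_le_coe (a := (2 : ℕ∞))).mp hdepN
  obtain ⟨x, y, hxM, -, hx, -⟩ := exists_regular_pair h2N
  obtain ⟨t, ht⟩ := aux_pow_ann C hPmin hxM
  obtain ⟨n₀, hn₀⟩ := Submodule.mkQ_surjective (LinearMap.range φ) c
  have hπ0 : πP (LocalizedModule.mk n₀ (1 : S)) = LocalizedModule.mk c (1 : S) := by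
    rw [hπPdef, IsLocalizedModule.map_LocalizedModules, hπdef, hn₀]
  have hcP : LocalizedModule.mk c (1 : S) ≠ 0 := mk_one_ne_zero' hc
  by_cases hannM : Module.annihilator R M ≤ P
  · -- main case
    have hdepM := hS2M P hP hannM
    rw [min_eq_left hdim] at hdepM
    have h2M : (2 : ℕ∞) ≤ moduleDepth (Localization.AtPrime P) (LocalizedModule S M) := by
      exact (WithBot.coe_le_coe (a := (2 : ℕ∞))).mp hdepM
    obtain ⟨a, b, haM, hbM, ha, hb⟩ := exists_regular_pair h2M
    obtain ⟨kk, hkk⟩ := aux_pow_ann C hPmin haM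
    obtain ⟨ss, hss⟩ := aux_pow_ann C hPmin hbM
    set α := a ^ kk with hαdef
    have hα : IsSMulRegular (LocalizedModule S M) α := ha.pow kk
    have hφinj : Function.Injective φP :=
      IsLocalizedModule.map_injective S (LocalizedModule.mkLinearMap S M)
        (LocalizedModule.mkLinearMap S N) φ hinj
    -- α is regular on N_P
    have hαN : ∀ v : LocalizedModule S N, α • v = 0 → v = 0 := by
      intro v hv
      have h1 : πP ((x ^ t) • v) = 0 := by
        rw [LinearMap.map_smul_of_tower, ht]
      obtain ⟨w, hw⟩ := hexact _ h1
      have h3 : α • w = 0 := by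
        apply hφinj
        rw [map_zero, LinearMap.map_smul_of_tower, hw, smul_comm, hv, smul_zero]
      have h4 : w = 0 := hα (by simpa using h3)
      have h5 : (x ^ t) • v = 0 := by rw [← hw, h4, map_zero]
      exact (hx.pow t) (by simpa using h5)
    have h1 : πP (α • LocalizedModule.mk n₀ (1 : S)) = 0 := by
      rw [LinearMap.map_smul_of_tower, hπ0, hkk]
    obtain ⟨w₀, hw₀⟩ := hexact _ h1
    have hw₀n : ¬ ∃ w₁, w₀ = α • w₁ := by
      rintro ⟨w₁, rfl⟩
      have h2 : α • (φP w₁ - LocalizedModule.mk n₀ (1 : S)) = 0 := by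
        rw [smul_sub, ← LinearMap.map_smul_of_tower, hw₀, sub_self]
      have h3 : φP w₁ = LocalizedModule.mk n₀ (1 : S) := by
        have := hαN _ h2; rwa [sub_eq_zero] at this
      exact hcP (by rw [← hπ0, ← h3, hπφ])
    have h4 : πP ((b ^ ss) • LocalizedModule.mk n₀ (1 : S)) = 0 := by
      rw [LinearMap.map_smul_of_tower, hπ0, hss]
    obtain ⟨w₂, hw₂⟩ := hexact _ h4
    have h6 : (b ^ ss) • w₀ = α • w₂ := by
      apply hφinj
      rw [LinearMap.map_smul_of_tower, LinearMap.map_smul_of_tower, hw₀, hw₂, smul_comm]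
    have hq1 : ∀ m, (∃ m', b • m = a • m') → ∃ m'', m = a • m'' :=
      fun m hm => quotReg_elementwise hb hm
    have hq2 := quotReg_pow ha hq1 kk
    obtain ⟨w₃, hw₃⟩ := quotReg_bpow hq2 ss w₀ ⟨w₂, h6⟩
    exact hw₀n ⟨w₃, hw₃⟩
  · -- M_P = 0 case
    haveI hsub : Subsingleton (LocalizedModule S M) := by
      have h1 : (⟨P, hP⟩ : PrimeSpectrum R) ∉ Module.support R M := by
        rw [Module.mem_support_iff_of_finite]; exact hannM
      exact Module.notMem_support_iff.mp h1
    have h1 : πP ((x ^ t) • LocalizedModule.mk n₀ (1 : S)) = 0 := by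
      rw [LinearMap.map_smul_of_tower, hπ0, ht]
    obtain ⟨w, hw⟩ := hexact _ h1
    have h2 : (x ^ t) • LocalizedModule.mk n₀ (1 : S) = 0 := by
      rw [← hw, Subsingleton.elim w 0, map_zero]
    have h3 : LocalizedModule.mk n₀ (1 : S) = 0 := (hx.pow t) (by simpa using h2)
    obtain ⟨u, hu⟩ := mk_eq_zero'.mp h3
    refine hc u u.2 ?_
    rw [← hn₀, ← map_smul, hu, map_zero]

/-- Let `R` be a Noetherian normal domain and `M`, `N` finitely generated `S₂` modules,
both locally free in codimension `≤ 1`.  If `φ : M → N` restricts to an isomorphism over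
the complement of a closed subset `V(I)` of codimension `≥ 2` in `Spec R`, then `φ` is an
isomorphism. -/
theorem stmt12 {R : Type*} [CommRing R] [IsNoetherianRing R]
    [IsDomain R] [IsIntegrallyClosed R]
    (M N : Type*) [AddCommGroup M] [Module R M] [Module.Finite R M]
    [AddCommGroup N] [Module R N] [Module.Finite R N]
    (hS2M : IsS2Module R M) (hS2N : IsS2Module R N)
    (hfreeM : IsLocallyFreeInCodimOne R M) (hfreeN : IsLocallyFreeInCodimOne R N)
    (I : Ideal R)
    (hcodim : ∀ (P : Ideal R) (hP : P.IsPrime), I ≤ P →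
      letI := hP
      (2 : WithBot (WithTop ℕ)) ≤ ringKrullDim (Localization.AtPrime P))
    (φ : M →ₗ[R] N)
    (hiso : ∀ (P : Ideal R) (hP : P.IsPrime), ¬ I ≤ P →
      letI := hP
      Function.Bijective
        (IsLocalizedModule.map P.primeCompl
          (LocalizedModule.mkLinearMap P.primeCompl M)
          (LocalizedModule.mkLinearMap P.primeCompl N) φ)) :
    Function.Bijective φ := by
  refine ⟨?_, ?_⟩
  · exact stmt12_inj M N hS2M hS2N I hcodim φ hiso
  · exact stmt12_surj M N hS2M hS2N I hcodim φ hiso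
      (stmt12_inj M N hS2M hS2N I hcodim φ hiso)
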